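/- Let k ≥ 2 and m = 2k. In the group W(m) = ⟨s₁,s₂,s₃ : s₁² = s₂² = s₃² = (s₁s₂)^m = (s₂s₃)^m = e⟩, the identity (s₁s₂)^{k−1} s₁ (s₃s₂)^k = (s₂s₁)^k s₃ (s₂s₃)^{k−1} holds. -/

import Mathlib

theorem stmt_17 (k : ℕ) (hk : 2 ≤ k)
    (rels : Set (FreeGroup (Fin 3)))
    (hrels : rels = {FreeGroup.of 0 ^ 2, FreeGroup.of 1 ^ 2, FreeGroup.of 2 ^ 2,
      (FreeGroup.of 0 * FreeGroup.of 1) ^ (2 * k),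
      (FreeGroup.of 1 * FreeGroup.of 2) ^ (2 * k)})
    (s₁ s₂ s₃ : PresentedGroup rels)
    (h1 : s₁ = PresentedGroup.of 0) (h2 : s₂ = PresentedGroup.of 1)
    (h3 : s₃ = PresentedGroup.of 2) :
    (s₁ * s₂) ^ (k - 1) * s₁ * (s₃ * s₂) ^ k = (s₂ * s₁) ^ k * s₃ * (s₂ * s₃) ^ (k - 1) := by
  have key : ∀ r ∈ rels, (QuotientGroup.mk r : PresentedGroup rels) = 1 := by
    intro r hr
    exact (QuotientGroup.eq_one_iff r).2 (Subgroup.subset_normalClosure hr)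
  have mk_of : ∀ i : Fin 3,
      (QuotientGroup.mk (FreeGroup.of i) : PresentedGroup rels) = PresentedGroup.of i :=
    fun i => rfl
  have e1 : s₁ ^ 2 = 1 := by
    have := key _ (hrels ▸ Set.mem_insert _ _)
    simp [mk_of] at this; rw [h1]; exact this
  have e2 : s₂ ^ 2 = 1 := by
    have := key _ (hrels ▸ Set.mem_insert_of_mem _ (Set.mem_insert _ _))
    simp [mk_of] at this; rw [h2]; exact this
  have e3 : s₃ ^ 2 = 1 := by
    have := key _ (hrels ▸ Set.mem_insert_of_mem _ (Set.mem_insert_of_mem _ (Set.mem_insert _ _)))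
    simp [mk_of] at this; rw [h3]; exact this
  have e12 : (s₁ * s₂) ^ (2 * k) = 1 := by
    have := key _ (hrels ▸ Set.mem_insert_of_mem _ (Set.mem_insert_of_mem _
      (Set.mem_insert_of_mem _ (Set.mem_insert _ _))))
    simp [mk_of] at this; rw [h1, h2]; exact this
  have e23 : (s₂ * s₃) ^ (2 * k) = 1 := by
    have := key _ (hrels ▸ Set.mem_insert_of_mem _ (Set.mem_insert_of_mem _
      (Set.mem_insert_of_mem _ (Set.mem_insert_of_mem _ (Set.mem_singleton _)))))
    simp [mk_of] at this; rw [h2, h3]; exact this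
  have i1 : s₁⁻¹ = s₁ := by
    rw [← mul_eq_one_iff_inv_eq, ← sq, e1]
  have i2 : s₂⁻¹ = s₂ := by
    rw [← mul_eq_one_iff_inv_eq, ← sq, e2]
  have i3 : s₃⁻¹ = s₃ := by
    rw [← mul_eq_one_iff_inv_eq, ← sq, e3]
  have half : ∀ a b : PresentedGroup rels, a⁻¹ = a → b⁻¹ = b →
      (a * b) ^ (2 * k) = 1 → (a * b) ^ k = (b * a) ^ k := by
    intro a b ha hb h
    have : (a * b) ^ k * (a * b) ^ k = 1 := by
      rw [← pow_add, ← two_mul]; exact h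
    have h2' : (a * b) ^ k = ((a * b) ^ k)⁻¹ := eq_inv_of_mul_eq_one_left this
    rw [h2', ← inv_pow, mul_inv_rev, ha, hb]
  have p12 : (s₁ * s₂) ^ k = (s₂ * s₁) ^ k := half _ _ i1 i2 e12
  have p23 : (s₂ * s₃) ^ k = (s₃ * s₂) ^ k := half _ _ i2 i3 e23
  -- conjugation identity: a * (b*a)^n = (a*b)^n * a
  have conj : ∀ (a b : PresentedGroup rels) (n : ℕ), a * (b * a) ^ n = (a * b) ^ n * a := by
    intro a b n
    exact (SemiconjBy.pow_right (by simp [SemiconjBy, mul_assoc]) n)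
  obtain ⟨n, rfl⟩ : ∃ n, k = n + 1 := ⟨k - 1, by omega⟩
  simp only [Nat.add_sub_cancel]
  calc (s₁ * s₂) ^ n * s₁ * (s₃ * s₂) ^ (n + 1)
      = (s₁ * s₂) ^ n * s₁ * (s₂ * s₃) ^ (n + 1) := by rw [p23]
    _ = (s₁ * s₂) ^ n * (s₁ * s₂) * (s₃ * (s₂ * s₃) ^ n) := by
        rw [pow_succ']; simp [mul_assoc]
    _ = (s₁ * s₂) ^ (n + 1) * ((s₃ * s₂) ^ n * s₃) := by
        rw [conj s₃ s₂ n, pow_succ]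
    _ = (s₂ * s₁) ^ (n + 1) * s₃ * (s₂ * s₃) ^ n := by
        rw [p12, ← conj s₃ s₂ n, mul_assoc]
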